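/- Let T ⊆ 2^{<ℕ} be an infinite binary tree. For each y, let σ_y be the lexicographically least element of T of length y. Define f : [ℕ]² → Bool by f(x,y) = σ_y(x) for x < y. Then f is a stable coloring: for each x there exists t > x such that f(x,y) = f(x,t) for all y > t. -/

import Mathlib

/-- The initial segment of length `n` of an infinite binary sequence `p`. -/
def initSeg (p : ℕ → Bool) (n : ℕ) : List Bool := (List.range n).map p

/-- A tree of finite binary strings: a set closed under initial segments. -/
def IsTree (T : Set (List Bool)) : Prop := ∀ σ ∈ T, ∀ τ : List Bool, τ <+: σ → τ ∈ T

/-- `H` is homogeneous for the string `σ` with color `c`. -/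
def HomogFor (H : Set ℕ) (c : Bool) (σ : List Bool) : Prop :=
  ∀ x ∈ H, x < σ.length → σ.getD x false = c

/-- `H` is homogeneous (with color `c`) for arbitrarily long strings of `T`. -/
def HomogPathC (H : Set ℕ) (c : Bool) (T : Set (List Bool)) : Prop :=
  ∀ t : ℕ, ∃ σ ∈ T, t ≤ σ.length ∧ HomogFor H c σ

private lemma lex_take {r : Bool → Bool → Prop} :
    ∀ (k : ℕ) {a b : List Bool}, List.Lex r a b →
      List.Lex r (a.take k) (b.take k) ∨ a.take k = b.take k := by
  intro k a b h
  induction h generalizing k with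
  | nil =>
    cases k with
    | zero => right; rfl
    | succ k => left; simpa using List.Lex.nil
  | @rel a l₁ b l₂ hr =>
    cases k with
    | zero => right; rfl
    | succ k => left; simpa using List.Lex.rel hr
  | @cons a l₁ l₂ h ih =>
    cases k with
    | zero => right; rfl
    | succ k =>
      rcases ih k with h' | h'
      · left; simpa using List.Lex.cons h'
      · right; simp [h']

/-- For an infinite binary tree `T`, with `σs y` the lexicographically least element of
`T` of length `y`, the coloring `f x y = σs y x` (for `x < y`) is stable. -/
theorem stmt1 (T : Set (List Bool)) (hT : IsTree T)
    (hInf : ∀ n, ∃ σ ∈ T, σ.length = n)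
    (σs : ℕ → List Bool)
    (hmem : ∀ y, σs y ∈ T) (hlen : ∀ y, (σs y).length = y)
    (hleast : ∀ y, ∀ τ ∈ T, τ.length = y → σs y = τ ∨ List.Lex (· < ·) (σs y) τ)
    (f : ℕ → ℕ → Bool) (hf : ∀ x y, x < y → f x y = (σs y).getD x false) :
    ∀ x, ∃ t, x < t ∧ ∀ y, t < y → f x y = f x t := by
  intro x
  set k := x + 1 with hk
  -- monotonicity of `fun y => (σs y).take k` for `k ≤ y ≤ y'`
  have mono : ∀ y y', k ≤ y → y ≤ y' →
      (σs y).take k = (σs y').take k ∨ List.Lex (· < ·) ((σs y).take k) ((σs y').take k) := by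
    intro y y' hky hyy'
    have hτT : (σs y').take y ∈ T := hT _ (hmem y') _ (List.take_prefix _ _)
    have hτlen : ((σs y').take y).length = y := by
      simp [List.length_take, hlen, Nat.min_eq_left hyy']
    rcases hleast y _ hτT hτlen with h | h
    · left
      have := congrArg (List.take k) h
      simpa [List.take_take, Nat.min_eq_left hky] using this
    · rcases lex_take k h with h' | h'
      · right; rwa [List.take_take, Nat.min_eq_left hky] at h'
      · left; rwa [List.take_take, Nat.min_eq_left hky] at h'
  -- the set of length-`k` prefixes, a finite set
  have hfin : {l : List Bool | ∃ y, k ≤ y ∧ (σs y).take k = l}.Finite := by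
    apply (List.finite_length_eq Bool k).subset
    rintro l ⟨y, hky, rfl⟩
    simp [List.length_take, hlen, Nat.min_eq_left hky]
  have hne : {l : List Bool | ∃ y, k ≤ y ∧ (σs y).take k = l}.Nonempty :=
    ⟨(σs k).take k, k, le_refl k, rfl⟩
  obtain ⟨a, ⟨t, hkt, hta⟩, hmax⟩ : ∃ a ∈ {l : List Bool | ∃ y, k ≤ y ∧ (σs y).take k = l},
      ∀ a' ∈ {l : List Bool | ∃ y, k ≤ y ∧ (σs y).take k = l}, id a ≤ id a' → id a = id a' := by
    obtain ⟨a, ha, h⟩ := hfin.exists_maximal hne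
    exact ⟨a, ha, fun a' ha' hle => le_antisymm hle (h ha' hle)⟩
  refine ⟨t, lt_of_lt_of_le (Nat.lt_succ_self x) hkt, ?_⟩
  intro y hty
  have heq : (σs y).take k = (σs t).take k := by
    rcases mono t y hkt (le_of_lt hty) with h | h
    · exact h.symm
    · have : a = (σs y).take k := by
        apply hmax
        · exact ⟨y, le_trans hkt (le_of_lt hty), rfl⟩
        · rw [id, id, ← hta]
          exact le_of_lt h
      rw [← this, hta]
  have hxk : x < k := Nat.lt_succ_self x
  have key : ∀ z, k ≤ z → (σs z).getD x false = ((σs z).take k).getD x false := by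
    intro z hz
    have : x < (σs z).length := lt_of_lt_of_le hxk (by rw [hlen]; exact hz)
    simp only [List.getD_eq_getElem?_getD, List.getElem?_take]
    rw [if_pos hxk]
  rw [hf x y (by omega), hf x t (by omega),
      key y (by omega), key t hkt, heq]
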